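/- Let p be a prime with p ≡ 3 (mod 4). Then -U_p = Q^{-p} A^{(p+1)/4} Q^{-1} A^{p(p+1)/4}, where A = [[1,0],[1,1]], Q = [[1,4/p],[0,1]], U_p = [[p,0],[0,1/p]]. In particular U_p^2 lies in the subgroup generated by A and Q. -/

import Mathlib

abbrev SL2Q := Matrix.SpecialLinearGroup (Fin 2) ℚ

/-- A = [[1,0],[1,1]] -/
def matA : SL2Q := ⟨!![1,0;1,1], by norm_num [Matrix.det_fin_two_of]⟩
/-- B = [[0,1],[-1,0]] -/
def matB : SL2Q := ⟨!![0,1;-1,0], by norm_num [Matrix.det_fin_two_of]⟩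
/-- Q_q = [[1,q],[0,1]] -/
def matQ (q : ℚ) : SL2Q := ⟨!![1,q;0,1], by norm_num [Matrix.det_fin_two_of]⟩
/-- U_p = [[p,0],[0,1/p]] -/
def matU (p : ℚ) (hp : p ≠ 0) : SL2Q := ⟨!![p,0;0,p⁻¹], by rw [Matrix.det_fin_two_of]; field_simp; norm_num⟩
/-- lower unipotent [[1,0],[x,1]] -/
def matL (x : ℚ) : SL2Q := ⟨!![1,0;x,1], by norm_num [Matrix.det_fin_two_of]⟩

lemma matL_mul (x y : ℚ) : matL x * matL y = matL (x + y) := by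
  apply Subtype.ext
  show (matL x : Matrix (Fin 2) (Fin 2) ℚ) * matL y = matL (x+y)
  ext i j
  fin_cases i <;> fin_cases j <;> simp [matL, Matrix.mul_apply, Fin.sum_univ_two] <;> ring

lemma matQ_mul (x y : ℚ) : matQ x * matQ y = matQ (x + y) := by
  apply Subtype.ext
  show (matQ x : Matrix (Fin 2) (Fin 2) ℚ) * matQ y = matQ (x+y)
  ext i j
  fin_cases i <;> fin_cases j <;> simp [matQ, Matrix.mul_apply, Fin.sum_univ_two] <;> ring

lemma matL_zero : matL 0 = 1 := by
  apply Subtype.ext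
  show (matL 0 : Matrix (Fin 2) (Fin 2) ℚ) = 1
  ext i j
  fin_cases i <;> fin_cases j <;> simp [matL]

lemma matQ_zero : matQ 0 = 1 := by
  apply Subtype.ext
  show (matQ 0 : Matrix (Fin 2) (Fin 2) ℚ) = 1
  ext i j
  fin_cases i <;> fin_cases j <;> simp [matQ]

def lhom : Multiplicative ℚ →* SL2Q where
  toFun x := matL x.toAdd
  map_one' := matL_zero
  map_mul' x y := by simp [matL_mul]

def qhom : Multiplicative ℚ →* SL2Q where
  toFun x := matQ x.toAdd
  map_one' := matQ_zero
  map_mul' x y := by simp [matQ_mul]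

lemma matL_zpow (x : ℚ) (n : ℤ) : matL x ^ n = matL (n * x) := by
  have h := map_zpow lhom (Multiplicative.ofAdd x) n
  have h2 : lhom (Multiplicative.ofAdd x ^ n) = matL (n * x) := by
    simp [lhom, toAdd_zpow, zsmul_eq_mul]
  rw [← h2, h]; rfl

lemma matQ_zpow (x : ℚ) (n : ℤ) : matQ x ^ n = matQ (n * x) := by
  have h := map_zpow qhom (Multiplicative.ofAdd x) n
  have h2 : qhom (Multiplicative.ofAdd x ^ n) = matQ (n * x) := by
    simp [qhom, toAdd_zpow, zsmul_eq_mul]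
  rw [← h2, h]; rfl

lemma matQ_inv (x : ℚ) : (matQ x)⁻¹ = matQ (-x) := by
  rw [← zpow_neg_one, matQ_zpow]; norm_num

theorem stmt8 (p : ℕ) (hp : p.Prime) (h3 : p % 4 = 3) :
    -((matU p (Nat.cast_ne_zero.mpr hp.ne_zero) : Matrix (Fin 2) (Fin 2) ℚ)) =
      (((matQ (4/p))^(-(p:ℤ)) * matA^(((p:ℤ)+1)/4) * (matQ (4/p))⁻¹ * matA^((p:ℤ)*((p:ℤ)+1)/4) :
        SL2Q) : Matrix (Fin 2) (Fin 2) ℚ) ∧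
    (matU p (Nat.cast_ne_zero.mpr hp.ne_zero))^2 ∈ Subgroup.closure {matA, matQ (4/p)} := by
  have hp0 : (p:ℚ) ≠ 0 := Nat.cast_ne_zero.mpr hp.ne_zero
  have hA : matA = matL 1 := by apply Subtype.ext; norm_num [matA, matL]
  have hdvdn : 4 ∣ p + 1 := by omega
  have hdvd : (4:ℤ) ∣ (p:ℤ) + 1 := by exact_mod_cast Int.natCast_dvd_natCast.mpr hdvdn
  have h4k : 4 * (((p:ℤ)+1)/4) = (p:ℤ) + 1 := Int.mul_ediv_cancel' hdvd
  have hpk : (p:ℤ)*((p:ℤ)+1)/4 = (p:ℤ) * (((p:ℤ)+1)/4) := Int.mul_ediv_assoc _ hdvd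
  have h4kQ : 4 * (((((p:ℤ)+1)/4 : ℤ)) : ℚ) = (p:ℚ) + 1 := by exact_mod_cast h4k
  have key : -((matU p (Nat.cast_ne_zero.mpr hp.ne_zero) : Matrix (Fin 2) (Fin 2) ℚ)) =
      (((matQ (4/p))^(-(p:ℤ)) * matA^(((p:ℤ)+1)/4) * (matQ (4/p))⁻¹ * matA^((p:ℤ)*((p:ℤ)+1)/4) :
        SL2Q) : Matrix (Fin 2) (Fin 2) ℚ) := by
    rw [hpk, hA, matL_zpow, matL_zpow, matQ_zpow, matQ_inv]
    have e1 : matQ (((-(p:ℤ) : ℤ) : ℚ) * (4/p)) = matQ (-4) := by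
      congr 1; push_cast; field_simp
    rw [e1]
    ext i j
    simp only [Matrix.SpecialLinearGroup.coe_mul]
    fin_cases i <;> fin_cases j <;>
      simp [matQ, matL, matU, Matrix.mul_apply, Fin.sum_univ_two] <;>
      push_cast <;> field_simp <;>
      first
        | linear_combination h4kQ
        | linear_combination -h4kQ
        | linear_combination (p:ℚ) * h4kQ
        | linear_combination -(p:ℚ) * h4kQ
        | ring
    all_goals rw [add_comm (1:ℤ) (p:ℤ)]
    · linear_combination (1 - 4 * ((((p:ℤ)+1)/4 : ℤ) : ℚ)) * h4kQ
    · linear_combination (-4 : ℚ) * h4kQ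
    · linear_combination ((((p:ℤ)+1)/4 : ℤ) : ℚ) * h4kQ
  refine ⟨key, ?_⟩
  have hU2 : (matU p (Nat.cast_ne_zero.mpr hp.ne_zero))^2 =
      ((matQ (4/p))^(-(p:ℤ)) * matA^(((p:ℤ)+1)/4) * (matQ (4/p))⁻¹ * matA^((p:ℤ)*((p:ℤ)+1)/4))^2 := by
    apply Subtype.ext
    rw [pow_two, pow_two]
    show (matU p (Nat.cast_ne_zero.mpr hp.ne_zero) : Matrix (Fin 2) (Fin 2) ℚ) *
        (matU p (Nat.cast_ne_zero.mpr hp.ne_zero) : Matrix (Fin 2) (Fin 2) ℚ) = _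
    rw [← neg_mul_neg, key]
    rfl
  rw [hU2]
  have hAmem : matA ∈ Subgroup.closure {matA, matQ (4/p)} :=
    Subgroup.subset_closure (Set.mem_insert _ _)
  have hQmem : matQ (4/(p:ℚ)) ∈ Subgroup.closure {matA, matQ (4/p)} :=
    Subgroup.subset_closure (Set.mem_insert_of_mem _ rfl)
  exact pow_mem (mul_mem (mul_mem (mul_mem (zpow_mem hQmem _) (zpow_mem hAmem _)) (inv_mem hQmem)) (zpow_mem hAmem _)) 2
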